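/- Let a ∈ (0,1) and let Θ be an inner function such that the Beurling subspace ΘH² is C_{φ_a}-invariant. If Θ(z₀) = 0 for some z₀ ∈ 𝔻, then Θ(aⁿz₀ + 1 − aⁿ) = 0 for every n ∈ ℕ. -/

import Mathlib

open Complex MeasureTheory Metric Set Filter Topology

noncomputable section

/-- `n`-th Taylor coefficient of `f` at `0`. -/
def H2coeff (f : ℂ → ℂ) (n : ℕ) : ℂ := iteratedDeriv n f 0 / n.factorial

/-- Membership in the Hardy space `H²` of the unit disk, in coefficient form. -/
def MemH2 (f : ℂ → ℂ) : Prop :=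
  DifferentiableOn ℂ f (ball (0 : ℂ) 1) ∧ Summable fun n => ‖H2coeff f n‖ ^ 2

/-- The `H²` inner product (conjugate-linear in the first variable). -/
def H2inner (f g : ℂ → ℂ) : ℂ :=
  ∑' n : ℕ, (starRingEnd ℂ) (H2coeff f n) * H2coeff g n

/-- The `H²` distance between two functions. -/
def H2dist (f g : ℂ → ℂ) : ℝ := Real.sqrt (∑' n : ℕ, ‖H2coeff f n - H2coeff g n‖ ^ 2)

/-- The affine self-map `φ_a(z) = a z + 1 - a` of the unit disk. -/
def phiA (a : ℝ) : ℂ → ℂ := fun z => (a : ℂ) * z + 1 - (a : ℂ)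

/-- The composition operator `C_φ f = f ∘ φ`. -/
def compOp (φ : ℂ → ℂ) (f : ℂ → ℂ) : ℂ → ℂ := f ∘ φ

/-- A set of functions is invariant under an operator. -/
def InvariantUnderOp (T : (ℂ → ℂ) → (ℂ → ℂ)) (M : Set (ℂ → ℂ)) : Prop :=
  ∀ f ∈ M, T f ∈ M

/-- `f` has radial limit `L` at the boundary point `e^{iθ}`. -/
def RadialLimit (f : ℂ → ℂ) (θ : ℝ) (L : ℂ) : Prop :=
  Tendsto (fun r : ℝ => f ((r : ℂ) * Complex.exp ((θ : ℂ) * Complex.I))) (𝓝[<] (1 : ℝ)) (𝓝 L)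

/-- An inner function: a member of `H²` with unimodular radial limits a.e. -/
def IsInnerFn (Θ : ℂ → ℂ) : Prop :=
  MemH2 Θ ∧ ∀ᵐ θ : ℝ, ∃ L : ℂ, RadialLimit Θ θ L ∧ ‖L‖ = 1

/-- `Θ` is nonconstant on the unit disk. -/
def NonconstantOnDisk (Θ : ℂ → ℂ) : Prop :=
  ∃ z ∈ ball (0 : ℂ) 1, ∃ w ∈ ball (0 : ℂ) 1, Θ z ≠ Θ w

/-- The Beurling subspace `Θ H²`. -/
def BeurlingSpace (Θ : ℂ → ℂ) : Set (ℂ → ℂ) :=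
  {f | MemH2 f ∧ ∃ g, MemH2 g ∧ EqOn f (fun z => Θ z * g z) (ball (0 : ℂ) 1)}

/-- The model space `(Θ H²)^⊥`, the orthogonal complement of `Θ H²` in `H²`. -/
def ModelSpace (Θ : ℂ → ℂ) : Set (ℂ → ℂ) :=
  {f | MemH2 f ∧ ∀ g, MemH2 g → H2inner (fun z => Θ z * g z) f = 0}

/-- The singular inner function associated to a measure `μ` on the circle,
parametrized by the angle in `(0, 2π]`. -/
def singularInnerFun (μ : Measure ℝ) : ℂ → ℂ := fun z =>
  Complex.exp (-∫ t, (Complex.exp ((t : ℂ) * Complex.I) + z) /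
    (Complex.exp ((t : ℂ) * Complex.I) - z) ∂μ)

/-- `μ` is a finite positive Borel measure on the circle (parametrized by `(0, 2π]`)
which is singular with respect to Lebesgue measure. -/
def IsSingularMeasure (μ : Measure ℝ) : Prop :=
  IsFiniteMeasure μ ∧ μ (Set.Ioc 0 (2 * Real.pi))ᶜ = 0 ∧ μ.MutuallySingular volume

/-- A single Blaschke factor with zero `w` (with the convention that a zero at the
origin contributes the factor `z`). -/
def blaschkeFactor (w : ℂ) : ℂ → ℂ := fun z =>
  if w = 0 then z
  else ((starRingEnd ℂ) w / (‖w‖ : ℂ)) * ((w - z) / (1 - (starRingEnd ℂ) w * z))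

/-- The Blaschke product with zero sequence `zs`. -/
def blaschkeProd {ι : Type} (zs : ι → ℂ) : ℂ → ℂ := fun z => ∏' i, blaschkeFactor (zs i) z

/-- Regular points of an inner function `Θ`: points of the open disk where `Θ` does not
vanish, and boundary points across which `Θ` extends analytically with unimodular values
on the circle. -/
def RegularPoint (Θ : ℂ → ℂ) (z : ℂ) : Prop :=
  (z ∈ ball (0 : ℂ) 1 ∧ Θ z ≠ 0) ∨
  (‖z‖ = 1 ∧ ∃ (V : Set ℂ) (g : ℂ → ℂ), IsOpen V ∧ z ∈ V ∧
    DifferentiableOn ℂ g V ∧ EqOn g Θ (V ∩ ball (0 : ℂ) 1) ∧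
    ∀ w ∈ V, ‖w‖ = 1 → ‖g w‖ = 1)

/-- The spectrum `σ(Θ)` of an inner function: the complement in the closed disk of the
set of regular points. -/
def innerSpectrum (Θ : ℂ → ℂ) : Set ℂ :=
  {z ∈ closedBall (0 : ℂ) 1 | ¬ RegularPoint Θ z}

/-- Closure of a set of functions in the `H²` metric. -/
def H2Closure (M : Set (ℂ → ℂ)) : Set (ℂ → ℂ) :=
  {g | MemH2 g ∧ ∀ ε > (0 : ℝ), ∃ f ∈ M, H2dist g f < ε}

/-- A closed linear subspace of `H²`. -/
def IsClosedSubspaceH2 (M : Set (ℂ → ℂ)) : Prop :=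
  (∀ f ∈ M, MemH2 f) ∧ (0 : ℂ → ℂ) ∈ M ∧
  (∀ f ∈ M, ∀ g ∈ M, f + g ∈ M) ∧ (∀ c : ℂ, ∀ f ∈ M, c • f ∈ M) ∧
  H2Closure M ⊆ M

/-- `M` contains a function not vanishing identically on the disk. -/
def NontrivialH2 (M : Set (ℂ → ℂ)) : Prop := ∃ f ∈ M, ∃ z ∈ ball (0 : ℂ) 1, f z ≠ 0

/-- A minimal (nonzero, closed) invariant subspace for the composition operator `C_φ`:
it contains no nonzero proper closed `C_φ`-invariant subspace. -/
def IsMinimalInvariant (φ : ℂ → ℂ) (M : Set (ℂ → ℂ)) : Prop :=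
  IsClosedSubspaceH2 M ∧ InvariantUnderOp (compOp φ) M ∧ NontrivialH2 M ∧
  ∀ N : Set (ℂ → ℂ), IsClosedSubspaceH2 N → InvariantUnderOp (compOp φ) N →
    NontrivialH2 N → N ⊆ M → N = M

/-- The closed cyclic invariant subspace `K_f` generated by `f` under `C_φ`. -/
def cyclicSubspace (φ : ℂ → ℂ) (f : ℂ → ℂ) : Set (ℂ → ℂ) :=
  H2Closure (Submodule.span ℂ {h : ℂ → ℂ | ∃ n : ℕ, h = fun z => f (φ^[n] z)} : Set (ℂ → ℂ))

/-- The Cesàro operator on `H²`. -/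
def CesaroOp (f : ℂ → ℂ) : ℂ → ℂ := fun z =>
  ∑' n : ℕ, (((n : ℂ) + 1)⁻¹ * ∑ k ∈ Finset.range (n + 1), H2coeff f k) * z ^ n

/-- The space of (restrictions to the disk of) polynomials of degree at most `N`. -/
def PolySpace (N : ℕ) : Set (ℂ → ℂ) :=
  {f | DifferentiableOn ℂ f (ball (0 : ℂ) 1) ∧
    ∃ p : Polynomial ℂ, p.natDegree ≤ N ∧ ∀ z ∈ ball (0 : ℂ) 1, f z = Polynomial.eval z p}

/-- The subspace `zⁿ (Θ H²)^⊥` of `H²`. -/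
def shiftedModel (n : ℕ) (Θ : ℂ → ℂ) : Set (ℂ → ℂ) :=
  {f | MemH2 f ∧ ∃ g ∈ ModelSpace Θ, ∀ z ∈ ball (0 : ℂ) 1, f z = z ^ n * g z}

lemma itd_const' : ∀ (n : ℕ) (c : ℂ), iteratedDeriv (n + 1) (fun _ : ℂ => c) = fun _ => (0 : ℂ) := by
  intro n
  induction n with
  | zero => intro c; simp [iteratedDeriv_succ, iteratedDeriv_zero]
  | succ m ih =>
    intro c
    rw [iteratedDeriv_succ', deriv_const']
    exact ih 0

lemma memH2_one' : MemH2 (fun _ : ℂ => (1 : ℂ)) := by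
  constructor
  · exact differentiableOn_const 1
  · apply summable_of_ne_finset_zero (s := {0})
    intro n hn
    obtain ⟨m, rfl⟩ := Nat.exists_eq_succ_of_ne_zero (by simpa using hn)
    simp [H2coeff, itd_const' m 1]

lemma pt_mem_ball' (a : ℝ) (ha : a ∈ Set.Ioo (0 : ℝ) 1) (z₀ : ℂ) (hz₀ : z₀ ∈ ball (0 : ℂ) 1)
    (n : ℕ) : (a : ℂ) ^ n * z₀ + 1 - (a : ℂ) ^ n ∈ ball (0 : ℂ) 1 := by
  rw [mem_ball_zero_iff] at hz₀ ⊢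
  have ht0 : 0 < a ^ n := pow_pos ha.1 n
  have ht1 : a ^ n ≤ 1 := pow_le_one₀ ha.1.le ha.2.le
  have hrw : (a : ℂ) ^ n * z₀ + 1 - (a : ℂ) ^ n = (a : ℂ) ^ n * z₀ + (1 - (a : ℂ) ^ n) := by ring
  rw [hrw]
  have h1 : ‖(a : ℂ) ^ n * z₀‖ = a ^ n * ‖z₀‖ := by
    rw [norm_mul, norm_pow, Complex.norm_real, Real.norm_eq_abs, _root_.abs_of_pos ha.1]
  have h2 : ‖(1 - (a : ℂ) ^ n)‖ = 1 - a ^ n := by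
    have : (1 - (a : ℂ) ^ n) = ((1 - a ^ n : ℝ) : ℂ) := by push_cast; ring
    rw [this, Complex.norm_real, Real.norm_eq_abs, _root_.abs_of_nonneg (by linarith)]
  calc ‖(a : ℂ) ^ n * z₀ + (1 - (a : ℂ) ^ n)‖ ≤ ‖(a : ℂ) ^ n * z₀‖ + ‖(1 - (a : ℂ) ^ n)‖ :=
        norm_add_le _ _
    _ = a ^ n * ‖z₀‖ + (1 - a ^ n) := by rw [h1, h2]
    _ < a ^ n * 1 + (1 - a ^ n) := by
        have := mul_lt_mul_of_pos_left hz₀ ht0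
        linarith
    _ = 1 := by ring

/-- If `Θ` is inner, `Θ H²` is `C_{φ_a}`-invariant and `Θ(z₀) = 0` for some
`z₀ ∈ 𝔻`, then `Θ(aⁿ z₀ + 1 - aⁿ) = 0` for every `n ∈ ℕ`. -/
theorem statement18 (a : ℝ) (ha : a ∈ Set.Ioo (0 : ℝ) 1) (Θ : ℂ → ℂ) (hΘ : IsInnerFn Θ)
    (hinv : InvariantUnderOp (compOp (phiA a)) (BeurlingSpace Θ))
    (z₀ : ℂ) (hz₀ : z₀ ∈ ball (0 : ℂ) 1) (h0 : Θ z₀ = 0) :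
    ∀ n : ℕ, Θ ((a : ℂ) ^ n * z₀ + 1 - (a : ℂ) ^ n) = 0 := by
  have hself : Θ ∈ BeurlingSpace Θ := by
    refine ⟨hΘ.1, fun _ => 1, memH2_one', fun z _ => by simp⟩
  obtain ⟨_, g, hg, heq⟩ := hinv Θ hself
  intro n
  induction n with
  | zero => simpa using h0
  | succ n ih =>
    have key : (a : ℂ) ^ (n + 1) * z₀ + 1 - (a : ℂ) ^ (n + 1)
        = phiA a ((a : ℂ) ^ n * z₀ + 1 - (a : ℂ) ^ n) := by
      unfold phiA; ring
    rw [key]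
    have h2 := heq (pt_mem_ball' a ha z₀ hz₀ n)
    simp only [compOp, Function.comp_apply] at h2
    rw [h2, ih, zero_mul]
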